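/- For every binary word w, there exists a shortest antipalindrome having w as a prefix (the antipalindromic closure w^E), and it has the form w^E = v y E(v), where w = v y and y is the longest (possibly empty) antipalindromic suffix of w. -/

import Mathlib

def occursAt (f w : List Bool) (i : ℕ) : Prop :=
  i + f.length ≤ w.length ∧ (w.drop i).take f.length = f

def IsAttractor (w : List Bool) (Γ : Finset ℕ) : Prop :=
  (∀ γ ∈ Γ, γ < w.length) ∧
  ∀ f : List Bool, f ≠ [] → f <:+: w →
    ∃ i, occursAt f w i ∧ ∃ γ ∈ Γ, i ≤ γ ∧ γ < i + f.length

def Emap (w : List Bool) : List Bool := (w.reverse).map (fun b => !b)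

def IsPal (w : List Bool) : Prop := w.reverse = w

def IsAntipal (w : List Bool) : Prop := Emap w = w

def IsPalClosure (w p : List Bool) : Prop :=
  IsPal p ∧ w <+: p ∧ ∀ q, IsPal q → w <+: q → p.length ≤ q.length

def IsAntipalClosure (w p : List Bool) : Prop :=
  IsAntipal p ∧ w <+: p ∧ ∀ q, IsAntipal q → w <+: q → p.length ≤ q.length

lemma Emap_append (a b : List Bool) : Emap (a ++ b) = Emap b ++ Emap a := by
  simp [Emap]

lemma Emap_Emap (a : List Bool) : Emap (Emap a) = a := by
  simp [Emap, List.map_map, Function.comp_def]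

lemma Emap_length (a : List Bool) : (Emap a).length = a.length := by
  simp [Emap]

lemma Emap_nil : Emap ([] : List Bool) = [] := rfl

lemma middle_antipal (u t : List Bool) (h : IsAntipal (u ++ t))
    (hk : t.length ≤ u.length) : IsAntipal (u.drop t.length) := by
  unfold IsAntipal at *
  rw [Emap_append] at h
  set k := t.length with hkdef
  have hlen : (Emap t).length = k := Emap_length t
  have h1 : Emap t = u.take k := by
    have := congrArg (List.take k) h
    rwa [List.take_append_of_le_length hk, List.take_left' hlen] at this
  have h2 : Emap u = u.drop k ++ t := by
    have := congrArg (List.drop k) h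
    rwa [List.drop_append_of_le_length hk, List.drop_left' hlen] at this
  have h3 : Emap u = Emap (u.drop k) ++ t := by
    conv_lhs => rw [← List.take_append_drop k u, Emap_append, ← h1, Emap_Emap]
  have := h2.symm.trans h3
  exact (List.append_cancel_right this).symm

theorem stmt_5 (w : List Bool) :
    ∃ p, IsAntipalClosure w p ∧
      ∃ v y, w = v ++ y ∧ IsAntipal y ∧
        (∀ s, s <:+ w → IsAntipal s → s.length ≤ y.length) ∧
        p = v ++ y ++ Emap v := by
  classical
  set n := w.length with hn
  set P : ℕ → Prop := fun l => IsAntipal (w.drop (n - l)) with hP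
  have hP0 : P 0 := by simp [hP, IsAntipal, Emap, hn]
  set L := Nat.findGreatest P n with hL
  have hPL : P L := Nat.findGreatest_spec (Nat.zero_le n) hP0
  have hLn : L ≤ n := Nat.findGreatest_le n
  set v := w.take (n - L) with hv
  set y := w.drop (n - L) with hy
  have hvy : w = v ++ y := (List.take_append_drop _ w).symm
  have hylen : y.length = L := by
    simp [hy, hn, Nat.sub_sub_self hLn]; omega
  have hymax : ∀ s, s <:+ w → IsAntipal s → s.length ≤ y.length := by
    intro s hs hanti
    rw [hylen]
    have hslen : s.length ≤ n := hn ▸ hs.length_le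
    have hseq : s = w.drop (n - s.length) := by
      obtain ⟨u, hu⟩ := hs
      have : u.length = n - s.length := by
        have := congrArg List.length hu
        simp [hn] at this; omega
      rw [← this, ← hu, List.drop_left]
    exact Nat.le_findGreatest hslen (show IsAntipal (w.drop (n - s.length)) by rw [← hseq]; exact hanti)
  refine ⟨v ++ y ++ Emap v, ⟨?_, ?_, ?_⟩, v, y, hvy, hPL, hymax, rfl⟩
  · unfold IsAntipal
    rw [List.append_assoc, Emap_append, Emap_append, Emap_Emap, hPL, List.append_assoc]
  · exact ⟨Emap v, by rw [hvy, List.append_assoc]⟩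
  · intro q hq ⟨t, ht⟩
    have hqlen : q.length = n + t.length := by
      rw [← ht]; simp [hn]
    have hplen : (v ++ y ++ Emap v).length = n + v.length := by
      simp [Emap_length, hn]
      have : v.length + y.length = n := by
        have := congrArg List.length hvy; simp [hn] at this; omega
      omega
    rw [hplen, hqlen]
    by_cases hc : v.length ≤ t.length
    · omega
    · exfalso
      push_neg at hc
      have hvlen : v.length ≤ n := by simp [hv, hn]
      have htn : t.length ≤ w.length := by omega
      have hmid : IsAntipal (w.drop t.length) := middle_antipal w t (ht ▸ hq) htn
      have hle := hymax _ (List.drop_suffix _ _) hmid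
      rw [hylen] at hle
      have hdl : (w.drop t.length).length = n - t.length := by simp [hn]
      have hvL : v.length = n - L := by simp [hv, hn]
      omega
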